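/- The function h(w) = w·e^{w²/2}·Φ(w) is strictly increasing on all of ℝ, where Φ is the standard normal cumulative distribution function. -/

import Mathlib

open MeasureTheory Filter Set Topology

/-- The standard normal cumulative distribution function. -/
noncomputable def stdNormalCDF (w : ℝ) : ℝ :=
  ∫ x in Set.Iic w, (Real.sqrt (2 * Real.pi))⁻¹ * Real.exp (-x ^ 2 / 2)

namespace StdNormalAux

noncomputable def phi (x : ℝ) : ℝ := (Real.sqrt (2 * Real.pi))⁻¹ * Real.exp (-x ^ 2 / 2)

lemma sqrt2pi_pos : 0 < Real.sqrt (2 * Real.pi) :=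
  Real.sqrt_pos.2 (by positivity)

lemma phi_pos (x : ℝ) : 0 < phi x := mul_pos (inv_pos.2 sqrt2pi_pos) (Real.exp_pos _)

lemma phi_cont : Continuous phi := by unfold phi; fun_prop

lemma phi_integrable : Integrable phi := by
  have h : Integrable (fun x : ℝ => Real.exp (-(1/2 : ℝ) * x ^ 2)) :=
    integrable_exp_neg_mul_sq (by norm_num)
  have h2 := h.const_mul ((Real.sqrt (2 * Real.pi))⁻¹)
  refine h2.congr (Filter.Eventually.of_forall fun x => ?_)
  unfold phi; ring_nf

lemma cdf_eq (w : ℝ) : stdNormalCDF w = ∫ x in Set.Iic w, phi x := rfl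

lemma cdf_nonneg (w : ℝ) : 0 ≤ stdNormalCDF w := by
  rw [cdf_eq]
  exact setIntegral_nonneg measurableSet_Iic fun x _ => (phi_pos x).le

lemma cdf_pos (w : ℝ) : 0 < stdNormalCDF w := by
  rw [cdf_eq, setIntegral_pos_iff_support_of_nonneg_ae
    (Filter.Eventually.of_forall fun x => (phi_pos x).le) phi_integrable.integrableOn]
  have hsupp : Function.support phi = Set.univ := by
    ext x; simp [Function.mem_support, (phi_pos x).ne']
  rw [hsupp, Set.univ_inter, Real.volume_Iic]
  exact ENNReal.zero_lt_top

lemma cdf_hasDeriv (w : ℝ) : HasDerivAt stdNormalCDF (phi w) w := by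
  have key : ∀ u : ℝ, stdNormalCDF u = stdNormalCDF 0 + ∫ t in (0:ℝ)..u, phi t := by
    intro u
    have h := intervalIntegral.integral_Iic_sub_Iic (μ := volume) (f := phi) (a := 0) (b := u)
      phi_integrable.integrableOn phi_integrable.integrableOn
    rw [cdf_eq, cdf_eq]; linarith
  have hderiv : HasDerivAt (fun u : ℝ => stdNormalCDF 0 + ∫ t in (0:ℝ)..u, phi t) (phi w) w :=
    ((phi_cont.integral_hasStrictDerivAt 0 w).hasDerivAt).const_add _
  have hfun : (fun u : ℝ => stdNormalCDF 0 + ∫ t in (0:ℝ)..u, phi t) = stdNormalCDF :=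
    funext fun u => (key u).symm
  rwa [hfun] at hderiv

lemma phi_hasDeriv (x : ℝ) : HasDerivAt phi (-x * phi x) x := by
  have h1 : HasDerivAt (fun y : ℝ => -y ^ 2 / 2) (-x) x := by
    have := ((hasDerivAt_pow 2 x).neg).div_const 2
    refine this.congr_deriv ?_
    push_cast; ring
  have h2 := (h1.exp).const_mul ((Real.sqrt (2 * Real.pi))⁻¹)
  refine h2.congr_deriv ?_
  unfold phi; ring

noncomputable def Cq : ℝ := ∫ y : ℝ, (Real.sqrt (2 * Real.pi))⁻¹ * Real.exp (-y ^ 2 / 4)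

lemma quarter_integrable :
    Integrable (fun y : ℝ => (Real.sqrt (2 * Real.pi))⁻¹ * Real.exp (-y ^ 2 / 4)) := by
  have h : Integrable (fun x : ℝ => Real.exp (-(1/4 : ℝ) * x ^ 2)) :=
    integrable_exp_neg_mul_sq (by norm_num)
  have h2 := h.const_mul ((Real.sqrt (2 * Real.pi))⁻¹)
  refine h2.congr (Filter.Eventually.of_forall fun x => ?_)
  ring_nf

lemma Cq_nonneg : 0 ≤ Cq :=
  integral_nonneg fun y => by positivity

lemma tail_bound {x : ℝ} (hx : x ≤ 0) : stdNormalCDF x ≤ Cq * Real.exp (-x ^ 2 / 4) := by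
  rw [cdf_eq]
  have step1 : (∫ y in Set.Iic x, phi y) ≤
      ∫ y in Set.Iic x, ((Real.sqrt (2 * Real.pi))⁻¹ * Real.exp (-y ^ 2 / 4)) *
        Real.exp (-x ^ 2 / 4) := by
    refine setIntegral_mono_on phi_integrable.integrableOn
      ((quarter_integrable.mul_const _).integrableOn) measurableSet_Iic fun y hy => ?_
    simp only [Set.mem_Iic] at hy
    unfold phi
    rw [mul_assoc, ← Real.exp_add]
    have hx2 : x ^ 2 ≤ y ^ 2 := by nlinarith
    have : (-y ^ 2 / 2 : ℝ) ≤ -y ^ 2 / 4 + -x ^ 2 / 4 := by linarith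
    exact mul_le_mul_of_nonneg_left (Real.exp_le_exp.2 this) (by positivity)
  have step2 : (∫ y in Set.Iic x, ((Real.sqrt (2 * Real.pi))⁻¹ * Real.exp (-y ^ 2 / 4)) *
      Real.exp (-x ^ 2 / 4)) ≤
      ∫ y : ℝ, ((Real.sqrt (2 * Real.pi))⁻¹ * Real.exp (-y ^ 2 / 4)) * Real.exp (-x ^ 2 / 4) :=
    setIntegral_le_integral (quarter_integrable.mul_const _)
      (Filter.Eventually.of_forall fun y => by positivity)
  have heq : (∫ y : ℝ, ((Real.sqrt (2 * Real.pi))⁻¹ * Real.exp (-y ^ 2 / 4)) *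
      Real.exp (-x ^ 2 / 4)) = Cq * Real.exp (-x ^ 2 / 4) := by
    rw [integral_mul_const]
    rfl
  exact step1.trans (step2.trans heq.le)

lemma tendsto_sq_atTop : Tendsto (fun x : ℝ => x ^ 2) atBot atTop := by
  have := (tendsto_pow_atTop (α := ℝ) (n := 2) (by norm_num)).comp tendsto_neg_atBot_atTop
  simpa [Function.comp_def] using this

lemma tendsto_exp_quarter : Tendsto (fun x : ℝ => Real.exp (-x ^ 2 / 4)) atBot (𝓝 0) := by
  refine Real.tendsto_exp_atBot.comp ?_
  exact (tendsto_neg_atTop_atBot.comp tendsto_sq_atTop).atBot_div_const (by norm_num)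

lemma tendsto_exp_half : Tendsto (fun x : ℝ => Real.exp (-x ^ 2 / 2)) atBot (𝓝 0) := by
  refine Real.tendsto_exp_atBot.comp ?_
  exact (tendsto_neg_atTop_atBot.comp tendsto_sq_atTop).atBot_div_const (by norm_num)

lemma T2 : Tendsto (fun x : ℝ => x ^ 2 * Real.exp (-x ^ 2 / 4)) atBot (𝓝 0) := by
  have h1 : Tendsto (fun t : ℝ => 4 * (t ^ 1 * Real.exp (-t))) atTop (𝓝 0) := by
    simpa using (Real.tendsto_pow_mul_exp_neg_atTop_nhds_zero 1).const_mul 4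
  have h2 : Tendsto (fun x : ℝ => x ^ 2 / 4) atBot atTop :=
    tendsto_sq_atTop.atTop_div_const (by norm_num)
  refine (h1.comp h2).congr fun x => ?_
  simp only [Function.comp_apply, pow_one]
  rw [show -(x ^ 2 / 4) = -x ^ 2 / 4 by ring]
  ring

noncomputable def k (x : ℝ) : ℝ := x * stdNormalCDF x + phi x

lemma k_hasDeriv (x : ℝ) : HasDerivAt k (stdNormalCDF x) x := by
  have h1 := (hasDerivAt_id x).mul (cdf_hasDeriv x)
  have h := h1.add (phi_hasDeriv x)
  have : HasDerivAt (fun y : ℝ => y * stdNormalCDF y + phi y)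
      (1 * stdNormalCDF x + x * phi x + -x * phi x) x := h
  unfold k
  convert this using 1
  ring

lemma k_mono : StrictMono k :=
  strictMono_of_deriv_pos fun x => by rw [(k_hasDeriv x).deriv]; exact cdf_pos x

lemma tendsto_x_cdf : Tendsto (fun x : ℝ => x * stdNormalCDF x) atBot (𝓝 0) := by
  have hg : Tendsto (fun x : ℝ => Cq * (x ^ 2 * Real.exp (-x ^ 2 / 4))) atBot (𝓝 0) := by
    simpa using T2.const_mul Cq
  refine squeeze_zero_norm' ?_ hg
  filter_upwards [eventually_le_atBot (-1 : ℝ)] with x hx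
  have hx0 : x ≤ 0 := by linarith
  rw [Real.norm_eq_abs, abs_mul, abs_of_nonneg (cdf_nonneg x), abs_of_nonpos hx0]
  have h1 := tail_bound hx0
  have hE : (0:ℝ) ≤ Real.exp (-x ^ 2 / 4) := (Real.exp_pos _).le
  nlinarith [mul_le_mul_of_nonneg_left h1 (by linarith : (0:ℝ) ≤ -x),
    mul_nonneg (mul_nonneg Cq_nonneg hE) (show (0:ℝ) ≤ x ^ 2 + x by nlinarith)]

lemma k_tendsto : Tendsto k atBot (𝓝 0) := by
  have hB : Tendsto phi atBot (𝓝 0) := by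
    have := tendsto_exp_half.const_mul ((Real.sqrt (2 * Real.pi))⁻¹)
    rw [mul_zero] at this
    exact this
  exact (by simpa using tendsto_x_cdf.add hB :
    Tendsto (fun x : ℝ => x * stdNormalCDF x + phi x) atBot (𝓝 0))

lemma k_pos (x : ℝ) : 0 < k x := by
  have h0 : 0 ≤ k (x - 1) := k_mono.monotone.le_of_tendsto k_tendsto (x - 1)
  have := k_mono (show x - 1 < x by linarith)
  linarith

noncomputable def gg (x : ℝ) : ℝ := (1 + x ^ 2) * stdNormalCDF x + x * phi x

lemma gg_hasDeriv (x : ℝ) : HasDerivAt gg (2 * k x) x := by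
  have h1 : HasDerivAt (fun y : ℝ => 1 + y ^ 2) (2 * x) x := by
    simpa using (hasDerivAt_pow 2 x).const_add 1
  have h2 := h1.mul (cdf_hasDeriv x)
  have h3 := (hasDerivAt_id x).mul (phi_hasDeriv x)
  have h := h2.add h3
  have : HasDerivAt (fun y : ℝ => (1 + y ^ 2) * stdNormalCDF y + y * phi y)
      (2 * x * stdNormalCDF x + (1 + x ^ 2) * phi x + (1 * phi x + x * (-x * phi x))) x := h
  unfold gg
  convert this using 1
  unfold k
  ring

lemma gg_mono : StrictMono gg :=
  strictMono_of_deriv_pos fun x => by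
    rw [(gg_hasDeriv x).deriv]; linarith [k_pos x]

lemma tendsto_cdf : Tendsto stdNormalCDF atBot (𝓝 0) := by
  have hg : Tendsto (fun x : ℝ => Cq * Real.exp (-x ^ 2 / 4)) atBot (𝓝 0) := by
    simpa using tendsto_exp_quarter.const_mul Cq
  refine squeeze_zero_norm' ?_ hg
  filter_upwards [eventually_le_atBot (0 : ℝ)] with x hx
  rw [Real.norm_eq_abs, abs_of_nonneg (cdf_nonneg x)]
  exact tail_bound hx

lemma tendsto_sq_cdf : Tendsto (fun x : ℝ => x ^ 2 * stdNormalCDF x) atBot (𝓝 0) := by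
  have hg : Tendsto (fun x : ℝ => Cq * (x ^ 2 * Real.exp (-x ^ 2 / 4))) atBot (𝓝 0) := by
    simpa using T2.const_mul Cq
  refine squeeze_zero_norm' ?_ hg
  filter_upwards [eventually_le_atBot (0 : ℝ)] with x hx
  rw [Real.norm_eq_abs, abs_mul, abs_of_nonneg (cdf_nonneg x), abs_of_nonneg (sq_nonneg x)]
  have := mul_le_mul_of_nonneg_left (tail_bound hx) (sq_nonneg x)
  nlinarith [this]

lemma tendsto_x_phi : Tendsto (fun x : ℝ => x * phi x) atBot (𝓝 0) := by
  have hg : Tendsto (fun x : ℝ => (Real.sqrt (2 * Real.pi))⁻¹ *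
      (x ^ 2 * Real.exp (-x ^ 2 / 4))) atBot (𝓝 0) := by
    simpa using T2.const_mul ((Real.sqrt (2 * Real.pi))⁻¹)
  refine squeeze_zero_norm' ?_ hg
  filter_upwards [eventually_le_atBot (-1 : ℝ)] with x hx
  have hx0 : x ≤ 0 := by linarith
  rw [Real.norm_eq_abs, abs_mul, abs_of_nonpos hx0, abs_of_nonneg (phi_pos x).le]
  unfold phi
  have hexp : Real.exp (-x ^ 2 / 2) ≤ Real.exp (-x ^ 2 / 4) :=
    Real.exp_le_exp.2 (by nlinarith [sq_nonneg x])
  have hc : (0:ℝ) ≤ (Real.sqrt (2 * Real.pi))⁻¹ := (inv_pos.2 sqrt2pi_pos).le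
  have hE : (0:ℝ) ≤ Real.exp (-x ^ 2 / 4) := (Real.exp_pos _).le
  have hE2 : (0:ℝ) ≤ Real.exp (-x ^ 2 / 2) := (Real.exp_pos _).le
  nlinarith [mul_le_mul_of_nonneg_left (mul_le_mul_of_nonneg_left hexp hc)
      (by linarith : (0:ℝ) ≤ -x),
    mul_nonneg (mul_nonneg hc hE) (show (0:ℝ) ≤ x ^ 2 + x by nlinarith)]

lemma gg_tendsto : Tendsto gg atBot (𝓝 0) := by
  have h := (tendsto_cdf.add tendsto_sq_cdf).add tendsto_x_phi
  have h0 : ((0:ℝ) + 0) + 0 = 0 := by norm_num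
  rw [h0] at h
  refine h.congr fun x => ?_
  unfold gg; ring

lemma gg_pos (x : ℝ) : 0 < gg x := by
  have h0 : 0 ≤ gg (x - 1) := gg_mono.monotone.le_of_tendsto gg_tendsto (x - 1)
  have := gg_mono (show x - 1 < x by linarith)
  linarith

end StdNormalAux

open StdNormalAux in
theorem stmt0 :
    StrictMono (fun w : ℝ => w * Real.exp (w ^ 2 / 2) * stdNormalCDF w) := by
  apply strictMono_of_deriv_pos
  intro w
  have h1 : HasDerivAt (fun y : ℝ => y ^ 2 / 2) w w := by
    have := (hasDerivAt_pow 2 w).div_const 2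
    refine this.congr_deriv ?_
    push_cast; ring
  have h2 := h1.exp
  have h3 := (hasDerivAt_id w).mul h2
  have h4 := h3.mul (cdf_hasDeriv w)
  have hD : HasDerivAt (fun w : ℝ => w * Real.exp (w ^ 2 / 2) * stdNormalCDF w)
      (Real.exp (w ^ 2 / 2) * gg w) w := by
    have : HasDerivAt (fun y : ℝ => y * Real.exp (y ^ 2 / 2) * stdNormalCDF y)
        ((1 * Real.exp (w ^ 2 / 2) + w * (Real.exp (w ^ 2 / 2) * w)) * stdNormalCDF w +
          w * Real.exp (w ^ 2 / 2) * phi w) w := h4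
    convert this using 1
    unfold gg phi
    ring
  rw [hD.deriv]
  exact mul_pos (Real.exp_pos _) (gg_pos w)
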